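/- Let l ∈ ℕ, (ρ,σ) ∈ 𝔙⁰ and let P, Q ∈ A₁⁽ˡ⁾ be nonzero. If [P,Q]_{ρ,σ} = 0, then st_{ρ,σ}(P) × st_{ρ,σ}(Q) = 0 and en_{ρ,σ}(P) × en_{ρ,σ}(Q) = 0. -/

import Mathlib

open scoped BigOperators
open scoped Classical

noncomputable section

namespace Dixmier

variable (K : Type*) [Field K] [CharZero K]

/-- Laurent polynomials `K[t,t⁻¹]`. -/
abbrev Laur (K : Type*) [Field K] := LaurentPolynomial K

/-- The `K`-linear endomorphisms of `K[t,t⁻¹]`. -/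
abbrev E (K : Type*) [Field K] := Module.End K (Laur K)

/-- Multiplication by `t^i`, i.e. the element `X^{i/l}` of `A₁⁽ˡ⁾`. -/
def Xpow (i : ℤ) : E K := LinearMap.mulLeft K (LaurentPolynomial.T i)

/-- The operator `Y = (1/l)·t^{1-l}·d/dt` of `A₁⁽ˡ⁾`; it maps `t^n ↦ (n/l)·t^{n-l}`. -/
def Yop (l : ℕ) : E K :=
  (Finsupp.linearCombination K fun n : ℤ =>
    algebraMap ℚ K ((n : ℚ) / (l : ℚ)) • LaurentPolynomial.T (n - (l : ℤ))) ∘ₗ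
    (AddMonoidAlgebra.coeffLinearEquiv K).toLinearMap

/-- The algebra `A₁⁽ˡ⁾`: the subalgebra of endomorphisms of `K[t,t⁻¹]` generated by
multiplication by `t`, multiplication by `t⁻¹`, and `Y`. -/
def A1 (l : ℕ) : Subalgebra K (E K) :=
  Algebra.adjoin K {Xpow K 1, Xpow K (-1), Yop K l}

/-- The Weyl algebra `A₁`, identified with its copy inside `A₁⁽¹⁾`. -/
def Weyl : Subalgebra K (E K) :=
  Algebra.adjoin K {Xpow K 1, Yop K 1}

/-- Interpretation of a coefficient family: `f ↦ ∑ f (i,j) • X^{i/l} Y^j`. -/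
def toEnd (l : ℕ) : ((ℤ × ℕ) →₀ K) →ₗ[K] E K :=
  Finsupp.linearCombination K fun p : ℤ × ℕ => Xpow K p.1 * Yop K l ^ p.2

/-- The (unique) coefficient family representing `P ∈ A₁⁽ˡ⁾`. -/
def rep (l : ℕ) (P : E K) : (ℤ × ℕ) →₀ K :=
  if h : ∃ f, toEnd K l f = P then h.choose else 0

/-- The point `(i/l, j) ∈ ℚ²` attached to an exponent pair `(i,j)`. -/
def pt (l : ℕ) (p : ℤ × ℕ) : ℚ × ℚ := ((p.1 : ℚ) / (l : ℚ), (p.2 : ℚ))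

/-- The set of points `(i/l, j) ∈ ℚ²` in the support of a coefficient family. -/
def suppPts (l : ℕ) (f : (ℤ × ℕ) →₀ K) : Set (ℚ × ℚ) :=
  pt l '' (f.support : Set (ℤ × ℕ))

/-- The support of `P ∈ A₁⁽ˡ⁾`, as a subset of `(1/l)ℤ × ℕ₀ ⊆ ℚ²`. -/
def Supp (l : ℕ) (P : E K) : Set (ℚ × ℚ) := suppPts K l (rep K l P)

/-- `v_{ρ,σ}` on points of `ℚ²`. -/
def vp (ρ σ : ℤ) (q : ℚ × ℚ) : ℚ := ρ * q.1 + σ * q.2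

/-- `v_{ρ,σ}(P) ∈ WithBot ℚ` (with `v_{ρ,σ}(0) = ⊥ = -∞`). -/
def vdeg (ρ σ : ℤ) (l : ℕ) (P : E K) : WithBot ℚ :=
  (rep K l P).support.sup fun p => (vp ρ σ (pt l p) : WithBot ℚ)

/-- The coefficient family of the `(ρ,σ)`-leading part of `P`. -/
def ltRep (ρ σ : ℤ) (l : ℕ) (P : E K) : (ℤ × ℕ) →₀ K :=
  (rep K l P).filter fun p => (vp ρ σ (pt l p) : WithBot ℚ) = vdeg K ρ σ l P

/-- The commutative algebra `L⁽ˡ⁾ = K[x^{1/l}, x^{-1/l}, y]`; the monomial `x^{i/l}·y^j`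
corresponds to the exponent pair `(i,j) ∈ ℤ × ℕ`. -/
abbrev Lalg (K : Type*) [Field K] := AddMonoidAlgebra K (ℤ × ℕ)

/-- The `(ρ,σ)`-leading term `ℓ_{ρ,σ}(P) ∈ L⁽ˡ⁾`. -/
def ell (ρ σ : ℤ) (l : ℕ) (P : E K) : Lalg K := AddMonoidAlgebra.ofCoeff (ltRep K ρ σ l P)

/-- `R ∈ L⁽ˡ⁾` is `(ρ,σ)`-homogeneous: it is `0` or equal to its own leading term. -/
def IsHomogL (ρ σ : ℤ) (l : ℕ) (R : Lalg K) : Prop :=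
  ∀ p ∈ R.coeff.support, ∀ q ∈ R.coeff.support, vp ρ σ (pt l p) = vp ρ σ (pt l q)

/-- `F ∈ A₁⁽ˡ⁾` is `(ρ,σ)`-homogeneous. -/
def IsHomogE (ρ σ : ℤ) (l : ℕ) (F : E K) : Prop :=
  ∀ p ∈ (rep K l F).support, ∀ q ∈ (rep K l F).support,
    vp ρ σ (pt l p) = vp ρ σ (pt l q)

/-- `q` is the point of `Supp(ℓ_{ρ,σ}(P))` at which `v_{1,-1}` is maximal. -/
def IsStOf (ρ σ : ℤ) (l : ℕ) (P : E K) (q : ℚ × ℚ) : Prop :=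
  q ∈ suppPts K l (ltRep K ρ σ l P) ∧
    ∀ q' ∈ suppPts K l (ltRep K ρ σ l P), vp 1 (-1) q' ≤ vp 1 (-1) q

/-- `st_{ρ,σ}(P)`. -/
def stP (ρ σ : ℤ) (l : ℕ) (P : E K) : ℚ × ℚ :=
  if h : ∃ q, IsStOf K ρ σ l P q then h.choose else 0

/-- `q` is the point of `Supp(ℓ_{ρ,σ}(P))` at which `v_{-1,1}` is maximal. -/
def IsEnOf (ρ σ : ℤ) (l : ℕ) (P : E K) (q : ℚ × ℚ) : Prop :=
  q ∈ suppPts K l (ltRep K ρ σ l P) ∧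
    ∀ q' ∈ suppPts K l (ltRep K ρ σ l P), vp (-1) 1 q' ≤ vp (-1) 1 q

/-- `en_{ρ,σ}(P)`. -/
def enP (ρ σ : ℤ) (l : ℕ) (P : E K) : ℚ × ℚ :=
  if h : ∃ q, IsEnOf K ρ σ l P q then h.choose else 0

/-- `w(P)`: the point of `Supp(ℓ_{1,-1}(P))` with maximal first coordinate. -/
def IsWOf (l : ℕ) (P : E K) (q : ℚ × ℚ) : Prop :=
  q ∈ suppPts K l (ltRep K 1 (-1) l P) ∧
    ∀ q' ∈ suppPts K l (ltRep K 1 (-1) l P), q'.1 ≤ q.1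

def wP (l : ℕ) (P : E K) : ℚ × ℚ :=
  if h : ∃ q, IsWOf K l P q then h.choose else 0

/-- `w̄(P)`: the point of `Supp(ℓ_{-1,1}(P))` with maximal first coordinate. -/
def IsWBarOf (l : ℕ) (P : E K) (q : ℚ × ℚ) : Prop :=
  q ∈ suppPts K l (ltRep K (-1) 1 l P) ∧
    ∀ q' ∈ suppPts K l (ltRep K (-1) 1 l P), q'.1 ≤ q.1

def wBarP (l : ℕ) (P : E K) : ℚ × ℚ :=
  if h : ∃ q, IsWBarOf K l P q then h.choose else 0

/-- The cross product `A × B` on `ℚ²`. -/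
def cross (A B : ℚ × ℚ) : ℚ := A.1 * B.2 - A.2 * B.1

/-- The set of directions `𝔙̄`. -/
def VBar (ρ σ : ℤ) : Prop := Int.gcd ρ σ = 1 ∧ 0 ≤ ρ + σ

/-- The set of directions `𝔙`. -/
def V (ρ σ : ℤ) : Prop := Int.gcd ρ σ = 1 ∧ 0 < ρ + σ

/-- The set of directions `𝔙⁰`. -/
def V0 (ρ σ : ℤ) : Prop := V ρ σ ∧ 0 < ρ

/-- The order on directions: `(1,-1)` is smallest, `(-1,1)` is largest, and otherwise
`(ρ,σ) < (ρ',σ')` iff `ρσ' - σρ' > 0`. -/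
def dirLt (ρ σ ρ' σ' : ℤ) : Prop :=
  ((ρ, σ) = ((1 : ℤ), (-1 : ℤ)) ∧ (ρ', σ') = ((-1 : ℤ), (1 : ℤ))) ∨ 0 < ρ * σ' - σ * ρ'

/-- The commutator `[P,Q] = PQ - QP`. -/
def brk (P Q : E K) : E K := P * Q - Q * P

/-- `P` and `Q` are `(ρ,σ)`-proportional:
`v_{ρ,σ}([P,Q]) < v_{ρ,σ}(P) + v_{ρ,σ}(Q) - (ρ+σ)`. -/
def Proportional (ρ σ : ℤ) (l : ℕ) (P Q : E K) : Prop :=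
  vdeg K ρ σ l (brk K P Q) + (((ρ : ℚ) + (σ : ℚ) : ℚ) : WithBot ℚ)
    < vdeg K ρ σ l P + vdeg K ρ σ l Q

/-- The `(ρ,σ)`-bracket `[P,Q]_{ρ,σ} ∈ L⁽ˡ⁾`. -/
def rsBrk (ρ σ : ℤ) (l : ℕ) (P Q : E K) : Lalg K :=
  if Proportional K ρ σ l P Q then 0 else ell K ρ σ l (brk K P Q)

/-- `(ρ,σ) ∈ Dir(P)`. -/
def InDir (ρ σ : ℤ) (l : ℕ) (P : E K) : Prop :=
  V ρ σ ∧ 1 < (ltRep K ρ σ l P).support.card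

/-- `(ρ,σ) ∈ Dir̄(P)`. -/
def InDirBar (ρ σ : ℤ) (l : ℕ) (P : E K) : Prop :=
  InDir K ρ σ l P ∨ (ρ, σ) = ((1 : ℤ), (-1 : ℤ)) ∨ (ρ, σ) = ((-1 : ℤ), (1 : ℤ))

/-- The minimal second exponent occurring in a coefficient family. -/
def minSnd (f : (ℤ × ℕ) →₀ K) : ℕ :=
  if h : f.support.Nonempty then (f.support.image Prod.snd).min' (h.image _) else 0

/-- The univariate polynomial `f_{P,ρ,σ} ∈ K[x]`: writing
`ℓ_{ρ,σ}(P) = ∑_{i=0}^{γ} a_i·x^{r/l - iσ/ρ}·y^{s+i}`, it is `∑ a_i·xⁱ`. -/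
def fPol (ρ σ : ℤ) (l : ℕ) (P : E K) : Polynomial K :=
  ∑ p ∈ (ltRep K ρ σ l P).support,
    Polynomial.C (ltRep K ρ σ l P p) *
      Polynomial.X ^ (p.2 - minSnd K (ltRep K ρ σ l P))

/-- The total degree `v_{1,1}(P)` of an element of the Weyl algebra, as a natural number. -/
def tdeg (P : E K) : ℕ :=
  (rep K 1 P).support.sup fun p => p.1.toNat + p.2

/-- `(P,Q)` is a counterexample to the Dixmier conjecture: `[Q,P] = 1` but `P` and `Q`
do not generate the Weyl algebra `A₁` over `K`. -/
def IsCounterexample (P Q : E K) : Prop :=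
  P ∈ Weyl K ∧ Q ∈ Weyl K ∧ brk K Q P = 1 ∧ Algebra.adjoin K {P, Q} ≠ Weyl K

/-- A minimal pair: a counterexample minimizing `gcd(v_{1,1}(P), v_{1,1}(Q))`. -/
def IsMinimalPair (P Q : E K) : Prop :=
  IsCounterexample K P Q ∧
    ∀ P' Q' : E K, IsCounterexample K P' Q' →
      Nat.gcd (tdeg K P) (tdeg K Q) ≤ Nat.gcd (tdeg K P') (tdeg K Q')

/-- `P` is subrectangular (with some vertex `(a,b) ∈ ℕ × ℕ`). -/
def Subrectangular (P : E K) : Prop :=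
  ∃ a b : ℕ, 0 < a ∧ 0 < b ∧ ((a : ℚ), (b : ℚ)) ∈ Supp K 1 P ∧
    ∀ q ∈ Supp K 1 P, 0 ≤ q.1 ∧ q.1 ≤ (a : ℚ) ∧ 0 ≤ q.2 ∧ q.2 ≤ (b : ℚ)

/-- A standard minimal pair. -/
def IsStandardMinimalPair (P Q : E K) : Prop :=
  IsMinimalPair K P Q ∧ Subrectangular K P ∧ Subrectangular K Q ∧
    vp 1 (-1) (stP K 1 0 1 P) < 0 ∧ vp 1 (-1) (stP K 1 0 1 Q) < 0

/-- The commutative algebra of "polynomials" with exponents in `ℚ²`, used to express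
monomials such as `x^{r/l - iσ/ρ}·y^{s+i}`. -/
abbrev LQ (K : Type*) [Field K] := AddMonoidAlgebra K (ℚ × ℚ)

/-- The embedding of `L⁽ˡ⁾` into `LQ`, sending `x^{i/l}·y^j` to the monomial with
exponent `(i/l, j)`. -/
def toLQ (l : ℕ) (R : Lalg K) : LQ K := AddMonoidAlgebra.ofCoeff (Finsupp.mapDomain (pt l) R.coeff)

/-- The generalized binomial coefficient `binom(q,k) = q(q-1)⋯(q-k+1)/k!`. -/
def qchoose (q : ℚ) (k : ℕ) : ℚ :=
  (∏ m ∈ Finset.range k, (q - (m : ℚ))) / (k.factorial : ℚ)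

end Dixmier

end

namespace Dixmier


section Aux

variable {K : Type*} [Field K] [CharZero K]

/-- falling factorial -/
def fall (x : ℚ) (n : ℕ) : ℚ := ∏ t ∈ Finset.range n, (x - t)

@[simp] lemma fall_zero (x : ℚ) : fall x 0 = 1 := by simp [fall]

lemma fall_succ (x : ℚ) (n : ℕ) : fall x (n+1) = fall x n * (x - n) :=
  Finset.prod_range_succ _ _

@[simp] lemma fall_one (x : ℚ) : fall x 1 = x := by simp [fall]

lemma fall_succ' (x : ℚ) (n : ℕ) : fall x (n+1) = x * fall (x-1) n := by
  unfold fall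
  rw [Finset.prod_range_succ' (fun t => x - (t : ℚ)) n]
  simp only [Nat.cast_zero, sub_zero, Nat.cast_add, Nat.cast_one]
  rw [mul_comm]
  congr 1
  refine Finset.prod_congr rfl fun t _ => ?_
  ring

lemma fall_add (x : ℚ) (s t : ℕ) : fall x (s + t) = fall x s * fall (x - s) t := by
  induction t with
  | zero => simp
  | succ t ih =>
      rw [← Nat.add_assoc, fall_succ, ih, fall_succ, mul_assoc]
      congr 2
      push_cast; ring

lemma vandermonde (a b : ℚ) (n : ℕ) :
    fall (a + b) n = ∑ k ∈ Finset.range (n+1),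
      (n.choose k : ℚ) * fall a k * fall b (n - k) := by
  induction n with
  | zero => simp
  | succ n ih =>
      rw [fall_succ, ih, Finset.sum_mul]
      have key : ∀ k ∈ Finset.range (n+1),
          (n.choose k : ℚ) * fall a k * fall b (n - k) * (a + b - n)
            = ((n.choose k : ℚ) * (fall a (k+1) * fall b (n - k))
              + (n.choose k : ℚ) * (fall a k * fall b (n - k + 1))) := by
        intro k hk
        have hk' : (k : ℚ) + ((n - k : ℕ) : ℚ) = (n : ℚ) := by
          have h := Nat.lt_succ_iff.mp (Finset.mem_range.mp hk)
          push_cast [Nat.cast_sub h]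
          ring
        rw [fall_succ, fall_succ]
        linear_combination ((n.choose k : ℚ) * fall a k * fall b (n - k)) * hk'
      rw [Finset.sum_congr rfl key, Finset.sum_add_distrib]
      have hT : ∑ k ∈ Finset.range (n+2), ((n+1).choose k : ℚ) * fall a k * fall b (n + 1 - k)
          = (∑ k ∈ Finset.range (n+1), (n.choose k : ℚ) * (fall a (k+1) * fall b (n - k)))
            + ∑ k ∈ Finset.range (n+1), (n.choose k : ℚ) * (fall a k * fall b (n - k + 1)) := by
        rw [Finset.sum_range_succ' (fun k => ((n+1).choose k : ℚ) * fall a k * fall b (n + 1 - k)) (n+1)]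
        have pascal : ∀ k : ℕ, (((n+1).choose (k+1) : ℕ) : ℚ)
            = (n.choose k : ℚ) + (n.choose (k+1) : ℚ) := by
          intro k; rw [Nat.choose_succ_succ]; push_cast; ring
        have step : ∀ k ∈ Finset.range (n+1),
            ((n+1).choose (k+1) : ℚ) * fall a (k+1) * fall b (n + 1 - (k+1))
              = (n.choose k : ℚ) * (fall a (k+1) * fall b (n - k))
                + (n.choose (k+1) : ℚ) * fall a (k+1) * fall b (n + 1 - (k+1)) := by
          intro k hk
          rw [pascal k, Nat.succ_sub_succ]
          ring
        rw [Finset.sum_congr rfl step, Finset.sum_add_distrib, add_assoc]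
        congr 1
        have expand : ∑ k ∈ Finset.range (n+2), (n.choose k : ℚ) * fall a k * fall b (n + 1 - k)
            = (∑ k ∈ Finset.range (n+1), (n.choose (k+1) : ℚ) * fall a (k+1) * fall b (n + 1 - (k+1)))
              + (n.choose 0 : ℚ) * fall a 0 * fall b (n + 1 - 0) :=
          Finset.sum_range_succ' _ (n+1)
        have collapse : ∑ k ∈ Finset.range (n+2), (n.choose k : ℚ) * fall a k * fall b (n + 1 - k)
            = ∑ k ∈ Finset.range (n+1), (n.choose k : ℚ) * (fall a k * fall b (n - k + 1)) := by
          rw [Finset.sum_range_succ]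
          simp only [Nat.choose_succ_self, Nat.cast_zero, zero_mul, add_zero]
          refine Finset.sum_congr rfl fun k hk => ?_
          have h := Nat.lt_succ_iff.mp (Finset.mem_range.mp hk)
          rw [Nat.succ_sub h]
          ring
        rw [← collapse, expand]
        simp
      rw [hT]

lemma fall_shift (u v : ℚ) (s n : ℕ) :
    fall u s * fall (u + v - s) n
      = ∑ k ∈ Finset.range (n+1), (n.choose k : ℚ) * fall v k * fall u (s + (n - k)) := by
  have h : u + v - s = v + (u - s) := by ring
  rw [h, vandermonde, Finset.mul_sum]
  refine Finset.sum_congr rfl fun k hk => ?_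
  rw [fall_add u s (n - k)]
  ring

/-- joint injectivity of two independent linear functionals -/
lemma point_eq {ρ σ : ℤ} {c d : ℚ} (hdet : (ρ : ℚ) * d - (σ : ℚ) * c ≠ 0)
    {A B : ℚ × ℚ} (h1 : vp ρ σ A = vp ρ σ B)
    (h2 : c * A.1 + d * A.2 = c * B.1 + d * B.2) : A = B := by
  have hu : A.1 = B.1 := by
    have h1' : (ρ : ℚ) * A.1 + (σ : ℚ) * A.2 = (ρ : ℚ) * B.1 + (σ : ℚ) * B.2 := h1
    have := hdet
    apply mul_left_cancel₀ this
    linear_combination d * h1' - (σ : ℚ) * h2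
  have hv : A.2 = B.2 := by
    have h1' : (ρ : ℚ) * A.1 + (σ : ℚ) * A.2 = (ρ : ℚ) * B.1 + (σ : ℚ) * B.2 := h1
    apply mul_left_cancel₀ hdet
    linear_combination (ρ : ℚ) * h2 - c * h1'
  exact Prod.ext hu hv

lemma pt_inj {l : ℕ} (hl : 0 < l) : Function.Injective (pt l) := by
  intro p q h
  have hl' : (l : ℚ) ≠ 0 := Nat.cast_ne_zero.mpr hl.ne'
  have h1 : (p.1 : ℚ) / l = (q.1 : ℚ) / l := congrArg Prod.fst h
  have h2 : ((p.2 : ℚ)) = (q.2 : ℚ) := congrArg Prod.snd h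
  have : (p.1 : ℚ) = q.1 := by field_simp at h1; exact_mod_cast h1
  exact Prod.ext (by exact_mod_cast this) (by exact_mod_cast h2)

end Aux


section Act

variable {K : Type*} [Field K] [CharZero K]

open LaurentPolynomial

lemma Yop_T (l : ℕ) (m : ℤ) :
    Yop K l (T m) = algebraMap ℚ K ((m : ℚ) / (l : ℚ)) • (T (m - (l : ℤ)) : Laur K) := by
  have h : (T m : Laur K).coeff = Finsupp.single m 1 := rfl
  rw [Yop, LinearMap.comp_apply, LinearEquiv.coe_toLinearMap,
    AddMonoidAlgebra.coeffLinearEquiv_apply, h]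
  erw [Finsupp.linearCombination_single]
  rw [one_smul]

lemma Ypow_T (l : ℕ) (hl : 0 < l) (j : ℕ) (m : ℤ) :
    (Yop K l ^ j) (T m)
      = algebraMap ℚ K (fall ((m : ℚ) / (l : ℚ)) j) • (T (m - (j : ℤ) * l) : Laur K) := by
  have hl' : (l : ℚ) ≠ 0 := Nat.cast_ne_zero.mpr hl.ne'
  induction j with
  | zero => simp
  | succ j ih =>
      rw [pow_succ', Module.End.mul_apply, ih, map_smul, Yop_T, smul_smul, ← map_mul]
      have e1 : ((m - (j:ℤ) * l : ℤ) : ℚ) / (l : ℚ) = (m : ℚ) / l - j := by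
        push_cast; field_simp
      rw [e1]
      have e2 : fall ((m : ℚ)/l) j * ((m:ℚ)/l - j) = fall ((m : ℚ)/l) (j+1) :=
        (fall_succ _ _).symm
      rw [e2]
      congr 2
      push_cast; ring

lemma Xpow_T (i m : ℤ) : Xpow K i (T m) = (T (m + i) : Laur K) := by
  rw [Xpow, LinearMap.mulLeft_apply, ← T_add, add_comm]

lemma mono_T (l : ℕ) (hl : 0 < l) (i : ℤ) (j : ℕ) (m : ℤ) :
    (Xpow K i * Yop K l ^ j) (T m)
      = algebraMap ℚ K (fall ((m : ℚ) / (l : ℚ)) j) • (T (m + i - (j : ℤ) * l) : Laur K) := by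
  rw [Module.End.mul_apply, Ypow_T l hl, map_smul, Xpow_T]
  congr 2
  ring

lemma toEnd_single (l : ℕ) (p : ℤ × ℕ) (a : K) :
    toEnd K l (Finsupp.single p a) = a • (Xpow K p.1 * Yop K l ^ p.2) :=
  Finsupp.linearCombination_single _ _ _

lemma toEnd_apply (l : ℕ) (f : (ℤ × ℕ) →₀ K) (x : Laur K) :
    toEnd K l f x = ∑ p ∈ f.support, f p • (Xpow K p.1 * Yop K l ^ p.2) x := by
  rw [toEnd, Finsupp.linearCombination_apply, Finsupp.sum]
  simp [LinearMap.sum_apply]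

lemma toEnd_apply_T (l : ℕ) (hl : 0 < l) (f : (ℤ × ℕ) →₀ K) (m : ℤ) :
    toEnd K l f (T m)
      = ∑ p ∈ f.support,
          (f p * algebraMap ℚ K (fall ((m : ℚ) / (l : ℚ)) p.2)) • (T (m + p.1 - (p.2 : ℤ) * l) : Laur K) := by
  rw [toEnd_apply]
  refine Finset.sum_congr rfl fun p _ => ?_
  rw [mono_T l hl, smul_smul]

end Act


section Mul

variable {K : Type*} [Field K] [CharZero K]

open LaurentPolynomial

/-- the representative of the product of two monomials -/
noncomputable def monoRep (K : Type*) [Field K] [CharZero K] (l : ℕ) (p q : ℤ × ℕ) : (ℤ × ℕ) →₀ K :=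
  ∑ k ∈ Finset.range (p.2 + 1),
    Finsupp.single (p.1 + q.1 - (k : ℤ) * l, p.2 + q.2 - k)
      (algebraMap ℚ K ((p.2.choose k : ℚ) * fall ((q.1 : ℚ) / (l : ℚ)) k))

lemma toEnd_monoRep (l : ℕ) (hl : 0 < l) (p q : ℤ × ℕ) :
    toEnd K l (monoRep K l p q)
      = (Xpow K p.1 * Yop K l ^ p.2) * (Xpow K q.1 * Yop K l ^ q.2) := by
  have hl' : (l : ℚ) ≠ 0 := Nat.cast_ne_zero.mpr hl.ne'
  refine AddMonoidAlgebra.lhom_ext' fun m => LinearMap.ext fun a => ?_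
  have ha : (AddMonoidAlgebra.single m a : Laur K) = a • (T m : Laur K) := by
    rw [LaurentPolynomial.T, AddMonoidAlgebra.smul_single, smul_eq_mul, mul_one]
  rw [LinearMap.comp_apply, LinearMap.comp_apply, AddMonoidAlgebra.lsingle_apply, ha, map_smul, map_smul]
  congr 1
  have hE : m + q.1 - (q.2:ℤ)*l + p.1 - (p.2:ℤ) * l
      = m + p.1 + q.1 - ((p.2:ℤ) + (q.2:ℤ)) * l := by ring
  have hu : ((m + q.1 - (q.2:ℤ)*l : ℤ) : ℚ) / (l : ℚ)
      = (m : ℚ)/(l:ℚ) + (q.1:ℚ)/(l:ℚ) - (q.2:ℚ) := by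
    push_cast; field_simp
  show toEnd K l (monoRep K l p q) (T m)
      = ((Xpow K p.1 * Yop K l ^ p.2) * (Xpow K q.1 * Yop K l ^ q.2)) (T m)
  rw [Module.End.mul_apply, mono_T l hl, map_smul, mono_T l hl, smul_smul, ← map_mul, hE, hu]
  rw [monoRep, map_sum, LinearMap.sum_apply]
  have step : ∀ k ∈ Finset.range (p.2+1),
      toEnd K l (Finsupp.single (p.1 + q.1 - (k : ℤ) * l, p.2 + q.2 - k)
          ((algebraMap ℚ K) ((p.2.choose k : ℚ) * fall ((q.1 : ℚ) / (l : ℚ)) k))) (T m)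
        = algebraMap ℚ K ((p.2.choose k : ℚ) * fall ((q.1 : ℚ) / (l : ℚ)) k
            * fall ((m : ℚ) / (l : ℚ)) (q.2 + (p.2 - k)))
            • (T (m + p.1 + q.1 - ((p.2 : ℤ) + (q.2 : ℤ)) * l) : Laur K) := by
    intro k hk
    have hk' : k ≤ p.2 := Nat.lt_succ_iff.mp (Finset.mem_range.mp hk)
    rw [toEnd_single, LinearMap.smul_apply]
    dsimp only
    rw [mono_T l hl, smul_smul, ← map_mul]
    have e1 : p.2 + q.2 - k = q.2 + (p.2 - k) := by omega
    rw [e1]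
    have e2 : m + (p.1 + q.1 - (k:ℤ)*l) - ((q.2 + (p.2 - k) : ℕ) : ℤ) * l
        = m + p.1 + q.1 - ((p.2:ℤ) + (q.2:ℤ)) * l := by
      push_cast [Nat.cast_sub hk']
      ring
    rw [e2]
  refine Eq.trans (Finset.sum_congr rfl step) ?_
  rw [← Finset.sum_smul, ← map_sum]
  congr 1
  rw [← fall_shift ((m:ℚ)/(l:ℚ)) ((q.1:ℚ)/(l:ℚ)) q.2 p.2]

/-- representative of a product -/
noncomputable def mulRep (K : Type*) [Field K] [CharZero K] (l : ℕ) (f g : (ℤ × ℕ) →₀ K) : (ℤ × ℕ) →₀ K :=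
  ∑ p ∈ f.support, ∑ q ∈ g.support, (f p * g q) • monoRep K l p q

lemma toEnd_eq_sum (l : ℕ) (f : (ℤ × ℕ) →₀ K) :
    toEnd K l f = ∑ p ∈ f.support, f p • (Xpow K p.1 * Yop K l ^ p.2) := by
  rw [toEnd, Finsupp.linearCombination_apply, Finsupp.sum]

lemma toEnd_mul (l : ℕ) (hl : 0 < l) (f g : (ℤ × ℕ) →₀ K) :
    toEnd K l f * toEnd K l g = toEnd K l (mulRep K l f g) := by
  rw [mulRep, map_sum, toEnd_eq_sum l f, toEnd_eq_sum l g, Finset.sum_mul]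
  refine Finset.sum_congr rfl fun p hp => ?_
  rw [map_sum, Finset.mul_sum]
  refine Finset.sum_congr rfl fun q hq => ?_
  rw [map_smul, toEnd_monoRep l hl, smul_mul_assoc, mul_smul_comm, smul_smul]

end Mul



section Inj

variable {K : Type*} [Field K] [CharZero K]

open LaurentPolynomial Polynomial

lemma algebraMap_fall (x : ℚ) (j : ℕ) :
    algebraMap ℚ K (fall x j) = ∏ k ∈ Finset.range j, (algebraMap ℚ K x - (k : K)) := by
  rw [fall, map_prod]
  refine Finset.prod_congr rfl fun k _ => ?_
  rw [map_sub, map_natCast]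

lemma toEnd_eq_zero {l : ℕ} (hl : 0 < l) {f : (ℤ × ℕ) →₀ K}
    (h : toEnd K l f = 0) : f = 0 := by
  by_contra hf
  obtain ⟨p0, hp0⟩ := Finsupp.support_nonempty_iff.mpr hf
  have hlK : ((l : K)) ≠ 0 := Nat.cast_ne_zero.mpr hl.ne'
  set s : ℤ := p0.1 - (p0.2 : ℤ) * l with hs
  set S : Finset (ℤ × ℕ) := f.support.filter (fun p => p.1 - (p.2 : ℤ) * l = s) with hS
  have hp0S : p0 ∈ S := by
    rw [hS, Finset.mem_filter]
    exact ⟨hp0, rfl⟩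
  -- coefficient extraction
  have hext : ∀ m : ℤ, ∑ p ∈ S, f p * algebraMap ℚ K (fall ((m : ℚ) / (l : ℚ)) p.2) = 0 := by
    intro m
    have h0 : (toEnd K l f) (T m) = 0 := by rw [h]; rfl
    rw [toEnd_apply_T l hl] at h0
    have h1 := congrArg (fun u : Laur K => u.coeff (m + s)) h0
    simp only [AddMonoidAlgebra.coeff_zero, Finsupp.coe_zero, Pi.zero_apply] at h1
    rw [AddMonoidAlgebra.coeff_sum, Finset.sum_apply'] at h1
    have h2 : ∀ p ∈ f.support,
        ((f p * algebraMap ℚ K (fall ((m : ℚ) / (l : ℚ)) p.2)) • (T (m + p.1 - (p.2:ℤ)*l) : Laur K)).coeff (m + s)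
          = if p.1 - (p.2 : ℤ) * l = s then f p * algebraMap ℚ K (fall ((m : ℚ) / (l : ℚ)) p.2) else 0 := by
      intro p _
      rw [AddMonoidAlgebra.coeff_smul_apply, T_apply, smul_eq_mul]
      by_cases hc : p.1 - (p.2 : ℤ) * l = s
      · rw [if_pos (show m + p.1 - (p.2:ℤ)*l = m + s by omega), if_pos hc, mul_one]
      · rw [if_neg (show ¬ m + p.1 - (p.2:ℤ)*l = m + s by omega), if_neg hc, mul_zero]
    rw [Finset.sum_congr rfl h2] at h1
    rw [hS, Finset.sum_filter]
    exact h1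
  -- the polynomial
  set Fj : ℕ → Polynomial K := fun j => ∏ k ∈ Finset.range j, (Polynomial.C ((l : K))⁻¹ * X - Polynomial.C (k : K))
    with hFj
  have hfac_deg : ∀ k : ℕ, (Polynomial.C ((l : K))⁻¹ * X - Polynomial.C (k : K)).natDegree = 1 := by
    intro k
    rw [sub_eq_add_neg, ← Polynomial.C_neg]
    exact natDegree_linear (inv_ne_zero hlK)
  have hfac_lead : ∀ k : ℕ, (Polynomial.C ((l : K))⁻¹ * X - Polynomial.C (k : K)).leadingCoeff = (l : K)⁻¹ := by
    intro k
    rw [sub_eq_add_neg, ← Polynomial.C_neg]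
    exact leadingCoeff_linear (inv_ne_zero hlK)
  have hfac_ne : ∀ k : ℕ, (Polynomial.C ((l : K))⁻¹ * X - Polynomial.C (k : K)) ≠ 0 := by
    intro k hk
    have := hfac_deg k
    rw [hk] at this
    simp at this
  have hFj_deg : ∀ j, (Fj j).natDegree = j := by
    intro j
    rw [hFj]
    rw [natDegree_prod _ _ (fun k _ => hfac_ne k),
      Finset.sum_congr rfl (fun k _ => hfac_deg k), Finset.sum_const, smul_eq_mul, mul_one,
      Finset.card_range]
  have hFj_lead : ∀ j, (Fj j).leadingCoeff = ((l : K)⁻¹) ^ j := by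
    intro j
    rw [hFj, leadingCoeff_prod,
      Finset.prod_congr rfl (fun k _ => hfac_lead k), Finset.prod_const, Finset.card_range]
  set F : Polynomial K := ∑ p ∈ S, Polynomial.C (f p) * Fj p.2 with hF
  have hFeval : ∀ m : ℤ, F.eval ((m : K)) = 0 := by
    intro m
    rw [hF, eval_finset_sum]
    have : ∀ p ∈ S, (Polynomial.C (f p) * Fj p.2).eval ((m : K))
        = f p * algebraMap ℚ K (fall ((m : ℚ) / (l : ℚ)) p.2) := by
      intro p _
      rw [eval_mul, eval_C, algebraMap_fall]
      congr 1
      rw [hFj, eval_prod]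
      refine Finset.prod_congr rfl fun k _ => ?_
      rw [eval_sub, eval_mul, eval_C, eval_X, eval_C]
      congr 1
      rw [map_div₀, map_intCast, map_natCast]
      exact (div_eq_inv_mul _ _).symm
    rw [Finset.sum_congr rfl this]
    exact hext m
  have hF0 : F = 0 := by
    refine Polynomial.eq_zero_of_infinite_isRoot _ ?_
    apply Set.Infinite.mono (s := Set.range (fun m : ℤ => (m : K)))
    · rintro x ⟨m, rfl⟩
      exact hFeval m
    · exact Set.infinite_range_of_injective Int.cast_injective
  -- extract the top coefficient
  have hSne : S.Nonempty := ⟨p0, hp0S⟩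
  set T2 := S.image Prod.snd with hT2
  have hT2ne : T2.Nonempty := hSne.image _
  set J := T2.max' hT2ne with hJ
  have hJmem : J ∈ T2 := T2.max'_mem hT2ne
  obtain ⟨pJ, hpJS, hpJ2⟩ := Finset.mem_image.mp hJmem
  have hSshape : ∀ p ∈ S, p = (s + (p.2 : ℤ) * l, p.2) := by
    intro p hp
    have := (Finset.mem_filter.mp hp).2
    exact Prod.ext (by omega) rfl
  have hcoeff : F.coeff J = f pJ * ((l : K)⁻¹) ^ J := by
    rw [hF, finset_sum_coeff]
    rw [Finset.sum_eq_single_of_mem pJ hpJS]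
    · rw [coeff_C_mul, hpJ2]
      have hcc : (Fj J).coeff J = ((l : K)⁻¹) ^ J := by
        have hlc := hFj_lead J
        rwa [Polynomial.leadingCoeff, hFj_deg J] at hlc
      rw [hcc]
    · intro p hp hne
      rw [coeff_C_mul]
      have hplt : p.2 < J := by
        have hle : p.2 ≤ J := Finset.le_max' _ _ (Finset.mem_image_of_mem _ hp)
        rcases lt_or_eq_of_le hle with h' | h'
        · exact h'
        · exfalso
          apply hne
          rw [hSshape p hp, hSshape pJ hpJS, h', hpJ2]
      rw [coeff_eq_zero_of_natDegree_lt (by rw [hFj_deg]; exact hplt), mul_zero]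
  rw [hF0] at hcoeff
  simp only [coeff_zero] at hcoeff
  have : f pJ = 0 := by
    rcases mul_eq_zero.mp hcoeff.symm with h' | h'
    · exact h'
    · exact absurd h' (pow_ne_zero _ (inv_ne_zero hlK))
  exact (Finsupp.mem_support_iff.mp ((Finset.mem_filter.mp hpJS).1)) this

lemma toEnd_injective (l : ℕ) (hl : 0 < l) :
    Function.Injective (toEnd K l) := by
  intro f g h
  have : toEnd K l (f - g) = 0 := by rw [map_sub, h, sub_self]
  have := toEnd_eq_zero hl this
  exact sub_eq_zero.mp this

lemma rep_toEnd (l : ℕ) (hl : 0 < l) (f : (ℤ × ℕ) →₀ K) :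
    rep K l (toEnd K l f) = f := by
  rw [rep, dif_pos ⟨f, rfl⟩]
  exact toEnd_injective l hl (⟨f, rfl⟩ : ∃ g, toEnd K l g = toEnd K l f).choose_spec

lemma toEnd_rep {l : ℕ} {P : E K} (h : ∃ f, toEnd K l f = P) :
    toEnd K l (rep K l P) = P := by
  rw [rep, dif_pos h]
  exact h.choose_spec

end Inj


section Core

variable {K : Type*} [Field K] [CharZero K]

lemma monoRep_apply (l : ℕ) (p q z : ℤ × ℕ) :
    monoRep K l p q z = ∑ k ∈ Finset.range (p.2+1),
      (if ((p.1 + q.1 - (k:ℤ)*l, p.2 + q.2 - k) : ℤ × ℕ) = z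
       then algebraMap ℚ K ((p.2.choose k : ℚ) * fall ((q.1:ℚ)/(l:ℚ)) k) else 0) := by
  rw [monoRep, Finset.sum_apply']
  exact Finset.sum_congr rfl fun k _ => Finsupp.single_apply

lemma core {l : ℕ} (hl : 0 < l) {ρ σ : ℤ} (hρσ : 0 < ρ + σ)
    (f g : (ℤ × ℕ) →₀ K) {c d : ℚ} (hdet : (ρ:ℚ) * d - (σ:ℚ) * c ≠ 0)
    {pP pQ : ℤ × ℕ}
    (hPmem : pP ∈ f.support) (hQmem : pQ ∈ g.support)
    (hPv : ∀ p ∈ f.support, vp ρ σ (pt l p) ≤ vp ρ σ (pt l pP))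
    (hQv : ∀ q ∈ g.support, vp ρ σ (pt l q) ≤ vp ρ σ (pt l pQ))
    (hPw : ∀ p ∈ f.support, vp ρ σ (pt l p) = vp ρ σ (pt l pP) →
      c * (pt l p).1 + d * (pt l p).2 ≤ c * (pt l pP).1 + d * (pt l pP).2)
    (hQw : ∀ q ∈ g.support, vp ρ σ (pt l q) = vp ρ σ (pt l pQ) →
      c * (pt l q).1 + d * (pt l q).2 ≤ c * (pt l pQ).1 + d * (pt l pQ).2)
    (hzero : ∀ z : ℤ × ℕ, vp ρ σ (pt l z) = vp ρ σ (pt l pP) + vp ρ σ (pt l pQ) - ((ρ:ℚ)+(σ:ℚ)) →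
      (mulRep K l f g - mulRep K l g f) z = 0) :
    cross (pt l pP) (pt l pQ) = 0 := by
  have hl' : (l : ℚ) ≠ 0 := Nat.cast_ne_zero.mpr hl.ne'
  have hρσ' : (0:ℚ) < (ρ:ℚ) + (σ:ℚ) := by exact_mod_cast hρσ
  by_cases htriv : pP.2 = 0 ∧ pQ.2 = 0
  · simp [cross, pt, htriv.1, htriv.2]
  have hj : 1 ≤ pP.2 + pQ.2 := by omega
  set z0 : ℤ × ℕ := (pP.1 + pQ.1 - l, pP.2 + pQ.2 - 1) with hz0
  have hvz : vp ρ σ (pt l z0) = vp ρ σ (pt l pP) + vp ρ σ (pt l pQ) - ((ρ:ℚ)+(σ:ℚ)) := by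
    simp only [vp, pt, hz0]
    have hc : ((pP.2 + pQ.2 - 1 : ℕ) : ℚ) = (pP.2:ℚ) + (pQ.2:ℚ) - 1 := by
      push_cast [Nat.cast_sub hj]; ring
    push_cast [hc]
    field_simp
    ring
  have h0 := hzero z0 hvz
  -- the key combinatorial fact
  have key : ∀ p ∈ f.support, ∀ q ∈ g.support, ∀ k : ℕ, k ≤ p.2 + q.2 →
      p.1 + q.1 - (k:ℤ)*l = z0.1 → p.2 + q.2 - k = z0.2 →
      k = 0 ∨ (k = 1 ∧ p = pP ∧ q = pQ) := by
    intro p hp q hq k hk h1 h2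
    have hz1 : z0.1 = pP.1 + pQ.1 - l := rfl
    have hz2 : z0.2 = pP.2 + pQ.2 - 1 := rfl
    have e2 : (p.2:ℚ) + (q.2:ℚ) = (pP.2:ℚ) + (pQ.2:ℚ) + ((k:ℚ) - 1) := by
      have : (p.2:ℤ) + (q.2:ℤ) - (k:ℤ) = (pP.2:ℤ) + (pQ.2:ℤ) - 1 := by omega
      push_cast
      have := (by exact_mod_cast this : (p.2:ℚ) + (q.2:ℚ) - (k:ℚ) = (pP.2:ℚ) + (pQ.2:ℚ) - 1)
      linarith
    have e1 : (p.1:ℚ) + (q.1:ℚ) = (pP.1:ℚ) + (pQ.1:ℚ) + ((k:ℚ) - 1) * (l:ℚ) := by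
      rw [hz1] at h1
      have : (p.1:ℚ) + q.1 - (k:ℚ) * l = (pP.1:ℚ) + pQ.1 - l := by exact_mod_cast h1
      linarith
    have hsum : vp ρ σ (pt l p) + vp ρ σ (pt l q)
        = vp ρ σ (pt l pP) + vp ρ σ (pt l pQ) + ((k:ℚ) - 1) * ((ρ:ℚ)+(σ:ℚ)) := by
      simp only [vp, pt]
      field_simp
      linear_combination ((ρ:ℚ)) * e1 + (σ:ℚ) * (l:ℚ) * e2
    have hkle : k ≤ 1 := by
      by_contra hgt
      push_neg at hgt
      have hk2 : (2:ℚ) ≤ (k:ℚ) := by exact_mod_cast hgt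
      have hpos : 0 < ((k:ℚ) - 1) * ((ρ:ℚ)+(σ:ℚ)) := mul_pos (by linarith) hρσ'
      have := hPv p hp
      have := hQv q hq
      linarith
    interval_cases k
    · exact Or.inl rfl
    · right
      refine ⟨rfl, ?_⟩
      have hvp : vp ρ σ (pt l p) = vp ρ σ (pt l pP) := by
        have := hPv p hp; have := hQv q hq
        simp only [Nat.cast_one] at hsum
        linarith
      have hvq : vp ρ σ (pt l q) = vp ρ σ (pt l pQ) := by
        have := hPv p hp; have := hQv q hq
        simp only [Nat.cast_one] at hsum
        linarith
      have hwsum : (c * (pt l p).1 + d * (pt l p).2) + (c * (pt l q).1 + d * (pt l q).2)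
          = (c * (pt l pP).1 + d * (pt l pP).2) + (c * (pt l pQ).1 + d * (pt l pQ).2) := by
        simp only [pt]
        simp only [Nat.cast_one] at e1 e2
        field_simp
        linear_combination c * e1 + d * (l:ℚ) * e2
      have hwp := hPw p hp hvp
      have hwq := hQw q hq hvq
      have hwep : c * (pt l p).1 + d * (pt l p).2 = c * (pt l pP).1 + d * (pt l pP).2 := by
        linarith
      have hweq : c * (pt l q).1 + d * (pt l q).2 = c * (pt l pQ).1 + d * (pt l pQ).2 := by
        linarith
      constructor
      · exact pt_inj hl (point_eq hdet hvp hwep)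
      · exact pt_inj hl (point_eq hdet hvq hweq)
  -- generic evaluation of monoRep at z0
  have evalGen : ∀ (a b aS bS : ℤ × ℕ),
      (∀ k : ℕ, k ≤ a.2 → (a.1 + b.1 - (k:ℤ)*l = z0.1 ∧ a.2 + b.2 - k = z0.2) →
        k = 0 ∨ (k = 1 ∧ a = aS ∧ b = bS)) →
      (aS.1 + bS.1 - l = z0.1 ∧ aS.2 + bS.2 - 1 = z0.2) →
      monoRep K l a b z0
        = (if (a.1 + b.1 = z0.1 ∧ a.2 + b.2 = z0.2) then (1:K) else 0)
          + (if a = aS ∧ b = bS then algebraMap ℚ K ((a.2:ℚ) * ((b.1:ℚ)/(l:ℚ))) else 0) := by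
    intro a b aS bS hkey hstar
    rw [monoRep_apply, Finset.sum_range_succ']
    have h0term : (if ((a.1 + b.1 - ((0:ℕ):ℤ)*l, a.2 + b.2 - 0) : ℤ × ℕ) = z0
        then algebraMap ℚ K ((a.2.choose 0 : ℚ) * fall ((b.1:ℚ)/(l:ℚ)) 0) else 0)
        = (if (a.1 + b.1 = z0.1 ∧ a.2 + b.2 = z0.2) then (1:K) else 0) := by
      simp only [Nat.cast_zero, zero_mul, sub_zero, Nat.sub_zero, Nat.choose_zero_right,
        Nat.cast_one, fall_zero, mul_one, map_one, Prod.ext_iff]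
    rw [h0term]
    rw [add_comm]
    congr 1
    -- the sum over k+1
    rw [Finset.sum_eq_single 0]
    · -- the k = 1 term
      by_cases hab : a = aS ∧ b = bS
      · rw [if_pos hab]
        obtain ⟨ha, hb⟩ := hab
        subst ha; subst hb
        have hc : ((a.1 + b.1 - ((0+1 : ℕ):ℤ)*l, a.2 + b.2 - (0+1)) : ℤ × ℕ) = z0 := by
          rw [Prod.ext_iff]
          constructor
          · have hzz : z0.1 = pP.1 + pQ.1 - (l:ℤ) := rfl
            push_cast
            linarith [hstar.1, hzz]
          · have := hstar.2
            omega
        rw [if_pos hc]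
        by_cases ha2 : a.2 = 0
        · simp [ha2]
        · rw [Nat.choose_one_right, fall_one]
      · rw [if_neg hab]
        by_cases ha2 : a.2 = 0
        · simp [ha2, Nat.choose]
        · by_cases hcond : ((a.1 + b.1 - ((0+1 : ℕ):ℤ)*l, a.2 + b.2 - (0+1)) : ℤ × ℕ) = z0
          · exfalso
            rw [Prod.ext_iff] at hcond
            rcases hkey 1 (by omega) ⟨by simpa using hcond.1, by simpa using hcond.2⟩ with h | h
            · exact absurd h one_ne_zero
            · exact hab h.2
          · rw [if_neg hcond]
    · intro k hk hkne
      rw [if_neg]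
      intro hcond
      rw [Prod.ext_iff] at hcond
      have hkle : k + 1 ≤ a.2 := Finset.mem_range.mp hk
      rcases hkey (k+1) (by omega) ⟨by simpa using hcond.1, by simpa using hcond.2⟩ with h | h
      · omega
      · exact absurd h.1 (by omega)
    · intro h0
      -- 0 ∉ range a.2 means a.2 = 0, then choose a.2 1 = 0
      have ha2 : a.2 = 0 := by
        by_contra h'
        exact h0 (Finset.mem_range.mpr (by omega))
      simp [ha2, Nat.choose]
  -- instantiate the generic evaluation
  have hstarPQ : pP.1 + pQ.1 - (l:ℤ) = z0.1 ∧ pP.2 + pQ.2 - 1 = z0.2 := ⟨rfl, rfl⟩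
  have hz1' : z0.1 = pP.1 + pQ.1 - (l:ℤ) := rfl
  have hz2' : z0.2 = pP.2 + pQ.2 - 1 := rfl
  have hsub : ∀ p ∈ f.support, ∀ q ∈ g.support,
      monoRep K l p q z0 - monoRep K l q p z0
        = (if p = pP ∧ q = pQ
           then algebraMap ℚ K ((pP.2:ℚ) * ((pQ.1:ℚ)/(l:ℚ)) - (pQ.2:ℚ) * ((pP.1:ℚ)/(l:ℚ)))
           else 0) := by
    intro p hp q hq
    have e1 := evalGen p q pP pQ
      (fun k hk hc => key p hp q hq k (by omega) hc.1 hc.2) hstarPQ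
    have e2 := evalGen q p pQ pP
      (fun k hk hc => by
        have hc1 : p.1 + q.1 - (k:ℤ)*l = z0.1 := by linarith [hc.1]
        have hc2 : p.2 + q.2 - k = z0.2 := by omega
        rcases key p hp q hq k (by omega) hc1 hc2 with h | h
        · exact Or.inl h
        · exact Or.inr ⟨h.1, h.2.2, h.2.1⟩)
      ⟨by omega, by omega⟩
    rw [e1, e2]
    have hcomm : (q.1 + p.1 = z0.1 ∧ q.2 + p.2 = z0.2) = (p.1 + q.1 = z0.1 ∧ p.2 + q.2 = z0.2) := by
      rw [add_comm q.1, add_comm q.2]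
    simp only [hcomm]
    rw [add_sub_add_left_eq_sub]
    by_cases hpq : p = pP ∧ q = pQ
    · rw [if_pos hpq, if_pos ⟨hpq.2, hpq.1⟩, if_pos hpq, ← map_sub]
      obtain ⟨h1, h2⟩ := hpq
      subst h1; subst h2
      rfl
    · rw [if_neg hpq, if_neg (fun h => hpq ⟨h.2, h.1⟩), if_neg hpq, sub_self]
  -- compute the total sum
  have hmf : mulRep K l f g z0 = ∑ p ∈ f.support, ∑ q ∈ g.support,
      f p * g q * monoRep K l p q z0 := by
    rw [mulRep, Finset.sum_apply']
    refine Finset.sum_congr rfl fun p hp => ?_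
    rw [Finset.sum_apply']
    refine Finset.sum_congr rfl fun q hq => ?_
    rw [Finsupp.smul_apply, smul_eq_mul]
  have hgf : mulRep K l g f z0 = ∑ p ∈ f.support, ∑ q ∈ g.support,
      f p * g q * monoRep K l q p z0 := by
    rw [mulRep, Finset.sum_apply']
    have : ∀ a ∈ g.support, (∑ b ∈ f.support, (g a * f b) • monoRep K l a b) z0
        = ∑ b ∈ f.support, f b * g a * monoRep K l a b z0 := by
      intro a ha
      rw [Finset.sum_apply']
      refine Finset.sum_congr rfl fun b hb => ?_
      rw [Finsupp.smul_apply, smul_eq_mul, mul_comm (g a) (f b)]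
    rw [Finset.sum_congr rfl this, Finset.sum_comm]
  have htot : (mulRep K l f g - mulRep K l g f) z0
      = ∑ p ∈ f.support, ∑ q ∈ g.support,
          f p * g q * (monoRep K l p q z0 - monoRep K l q p z0) := by
    rw [Finsupp.sub_apply, hmf, hgf, ← Finset.sum_sub_distrib]
    refine Finset.sum_congr rfl fun p hp => ?_
    rw [← Finset.sum_sub_distrib]
    refine Finset.sum_congr rfl fun q hq => ?_
    rw [mul_sub]
  have htot2 : ∑ p ∈ f.support, ∑ q ∈ g.support,
        f p * g q * (monoRep K l p q z0 - monoRep K l q p z0)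
      = ∑ p ∈ f.support, ∑ q ∈ g.support,
          f p * g q * (if p = pP ∧ q = pQ
            then algebraMap ℚ K ((pP.2:ℚ) * ((pQ.1:ℚ)/(l:ℚ)) - (pQ.2:ℚ) * ((pP.1:ℚ)/(l:ℚ)))
            else 0) :=
    Finset.sum_congr rfl fun p hp => Finset.sum_congr rfl fun q hq => by
      rw [hsub p hp q hq]
  have h00 : ∑ p ∈ f.support, ∑ q ∈ g.support,
      f p * g q * (if p = pP ∧ q = pQ
        then algebraMap ℚ K ((pP.2:ℚ) * ((pQ.1:ℚ)/(l:ℚ)) - (pQ.2:ℚ) * ((pP.1:ℚ)/(l:ℚ)))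
        else 0) = 0 := htot2.symm.trans (htot.symm.trans h0)
  have houter : ∀ p ∈ f.support, p ≠ pP →
      (∑ q ∈ g.support, f p * g q * (if p = pP ∧ q = pQ
        then algebraMap ℚ K ((pP.2:ℚ) * ((pQ.1:ℚ)/(l:ℚ)) - (pQ.2:ℚ) * ((pP.1:ℚ)/(l:ℚ)))
        else 0)) = 0 := by
    intro p _ hne
    apply Finset.sum_eq_zero
    intro q _
    rw [if_neg (fun h => hne h.1), mul_zero]
  rw [Finset.sum_eq_single_of_mem pP hPmem houter] at h00
  have hinner : ∀ q ∈ g.support, q ≠ pQ →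
      f pP * g q * (if pP = pP ∧ q = pQ
        then algebraMap ℚ K ((pP.2:ℚ) * ((pQ.1:ℚ)/(l:ℚ)) - (pQ.2:ℚ) * ((pP.1:ℚ)/(l:ℚ)))
        else 0) = 0 := by
    intro q _ hne
    rw [if_neg (fun h => hne h.2), mul_zero]
  rw [Finset.sum_eq_single_of_mem pQ hQmem hinner, if_pos ⟨rfl, rfl⟩] at h00
  have hfP : f pP ≠ 0 := Finsupp.mem_support_iff.mp hPmem
  have hgQ : g pQ ≠ 0 := Finsupp.mem_support_iff.mp hQmem
  have hA : algebraMap ℚ K ((pP.2:ℚ) * ((pQ.1:ℚ)/(l:ℚ)) - (pQ.2:ℚ) * ((pP.1:ℚ)/(l:ℚ))) = 0 := by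
    rcases mul_eq_zero.mp h00 with h | h
    · rcases mul_eq_zero.mp h with h' | h'
      · exact absurd h' hfP
      · exact absurd h' hgQ
    · exact h
  have hq0 : (pP.2:ℚ) * ((pQ.1:ℚ)/(l:ℚ)) - (pQ.2:ℚ) * ((pP.1:ℚ)/(l:ℚ)) = 0 := by
    exact (algebraMap ℚ K).injective (by rw [hA, map_zero])
  simp only [cross, pt]
  field_simp at hq0 ⊢
  linarith

end Core


section Glue

variable {K : Type*} [Field K] [CharZero K]

lemma ltRep_mem {ρ σ : ℤ} {l : ℕ} {P : E K} {p : ℤ × ℕ} :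
    p ∈ (ltRep K ρ σ l P).support ↔ p ∈ (rep K l P).support ∧
      ((vp ρ σ (pt l p) : ℚ) : WithBot ℚ) = vdeg K ρ σ l P := by
  rw [ltRep, Finsupp.support_filter, Finset.mem_filter]

lemma suppPts_lt_empty {ρ σ : ℤ} {l : ℕ} {P : E K} (h : (rep K l P).support = ∅) :
    suppPts K l (ltRep K ρ σ l P) = ∅ := by
  rw [suppPts, ltRep, Finsupp.support_filter, h, Finset.filter_empty]
  simp

lemma stP_of_empty {ρ σ : ℤ} {l : ℕ} {P : E K} (h : (rep K l P).support = ∅) :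
    stP K ρ σ l P = 0 := by
  rw [stP, dif_neg]
  rintro ⟨q, hq1, -⟩
  rw [suppPts_lt_empty h] at hq1
  exact absurd hq1 (Set.notMem_empty q)

lemma enP_of_empty {ρ σ : ℤ} {l : ℕ} {P : E K} (h : (rep K l P).support = ∅) :
    enP K ρ σ l P = 0 := by
  rw [enP, dif_neg]
  rintro ⟨q, hq1, -⟩
  rw [suppPts_lt_empty h] at hq1
  exact absurd hq1 (Set.notMem_empty q)

lemma vp_const_on_lt {ρ σ : ℤ} {l : ℕ} {P : E K} {p p' : ℤ × ℕ}
    (hp : p ∈ (ltRep K ρ σ l P).support) (hp' : p' ∈ (ltRep K ρ σ l P).support) :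
    vp ρ σ (pt l p) = vp ρ σ (pt l p') := by
  have h1 := (ltRep_mem.mp hp).2
  have h2 := (ltRep_mem.mp hp').2
  have := h1.trans h2.symm
  exact_mod_cast this

lemma stP_eq {l : ℕ} (hl : 0 < l) {ρ σ : ℤ} (hρσ : 0 < ρ + σ) (P : E K) {p0 : ℤ × ℕ}
    (hmem : p0 ∈ (ltRep K ρ σ l P).support)
    (hmax : ∀ p ∈ (ltRep K ρ σ l P).support, vp 1 (-1) (pt l p) ≤ vp 1 (-1) (pt l p0)) :
    stP K ρ σ l P = pt l p0 := by
  have hρσ' : (0:ℚ) < (ρ:ℚ) + (σ:ℚ) := by exact_mod_cast hρσ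
  have hdet : (ρ:ℚ) * (((-1 : ℤ)):ℚ) - (σ:ℚ) * (((1:ℤ)):ℚ) ≠ 0 := by
    push_cast
    intro h
    linarith
  have hst : IsStOf K ρ σ l P (pt l p0) := by
    constructor
    · exact ⟨p0, hmem, rfl⟩
    · rintro q' ⟨p', hp', rfl⟩
      exact hmax p' hp'
  rw [stP, dif_pos ⟨_, hst⟩]
  obtain ⟨⟨p1, hp1, hq1⟩, hmax1⟩ := (⟨_, hst⟩ : ∃ q, IsStOf K ρ σ l P q).choose_spec
  rw [← hq1]
  refine point_eq (c := (((1:ℤ)):ℚ)) (d := (((-1:ℤ)):ℚ)) hdet (vp_const_on_lt hp1 hmem) ?_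
  have h1 : vp 1 (-1) (pt l p1) ≤ vp 1 (-1) (pt l p0) := hmax p1 hp1
  have h2 : vp 1 (-1) (pt l p0) ≤ vp 1 (-1) (pt l p1) := by
    have := hmax1 (pt l p0) ⟨p0, hmem, rfl⟩
    rwa [← hq1] at this
  have h3 : vp 1 (-1) (pt l p1) = vp 1 (-1) (pt l p0) := le_antisymm h1 h2
  exact h3

lemma enP_eq {l : ℕ} (hl : 0 < l) {ρ σ : ℤ} (hρσ : 0 < ρ + σ) (P : E K) {p0 : ℤ × ℕ}
    (hmem : p0 ∈ (ltRep K ρ σ l P).support)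
    (hmax : ∀ p ∈ (ltRep K ρ σ l P).support, vp (-1) 1 (pt l p) ≤ vp (-1) 1 (pt l p0)) :
    enP K ρ σ l P = pt l p0 := by
  have hρσ' : (0:ℚ) < (ρ:ℚ) + (σ:ℚ) := by exact_mod_cast hρσ
  have hdet : (ρ:ℚ) * (((1 : ℤ)):ℚ) - (σ:ℚ) * (((-1:ℤ)):ℚ) ≠ 0 := by
    push_cast
    intro h
    linarith
  have hst : IsEnOf K ρ σ l P (pt l p0) := by
    constructor
    · exact ⟨p0, hmem, rfl⟩
    · rintro q' ⟨p', hp', rfl⟩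
      exact hmax p' hp'
  rw [enP, dif_pos ⟨_, hst⟩]
  obtain ⟨⟨p1, hp1, hq1⟩, hmax1⟩ := (⟨_, hst⟩ : ∃ q, IsEnOf K ρ σ l P q).choose_spec
  rw [← hq1]
  refine point_eq (c := (((-1:ℤ)):ℚ)) (d := (((1:ℤ)):ℚ)) hdet (vp_const_on_lt hp1 hmem) ?_
  have h1 : vp (-1) 1 (pt l p1) ≤ vp (-1) 1 (pt l p0) := hmax p1 hp1
  have h2 : vp (-1) 1 (pt l p0) ≤ vp (-1) 1 (pt l p1) := by
    have := hmax1 (pt l p0) ⟨p0, hmem, rfl⟩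
    rwa [← hq1] at this
  have h3 : vp (-1) 1 (pt l p1) = vp (-1) 1 (pt l p0) := le_antisymm h1 h2
  exact h3

end Glue

theorem rsBracket_eq_zero_aligned (K : Type*) [Field K] [CharZero K] (l : ℕ) (hl : 0 < l)
    (ρ σ : ℤ) (h0 : V0 ρ σ) (P Q : E K)
    (hP : P ∈ A1 K l) (hQ : Q ∈ A1 K l) (hP0 : P ≠ 0) (hQ0 : Q ≠ 0)
    (hbr : rsBrk K ρ σ l P Q = 0) :
    cross (stP K ρ σ l P) (stP K ρ σ l Q) = 0 ∧
    cross (enP K ρ σ l P) (enP K ρ σ l Q) = 0 := by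
  obtain ⟨⟨hgcd, hρσ⟩, hρ⟩ := h0
  have hl' : (l:ℚ) ≠ 0 := Nat.cast_ne_zero.mpr hl.ne'
  have hρσ' : (0:ℚ) < (ρ:ℚ) + (σ:ℚ) := by exact_mod_cast hρσ
  rcases Finset.eq_empty_or_nonempty (rep K l P).support with hPe | hPne
  · rw [stP_of_empty hPe, enP_of_empty hPe]
    constructor <;> simp [cross]
  rcases Finset.eq_empty_or_nonempty (rep K l Q).support with hQe | hQne
  · rw [stP_of_empty hQe, enP_of_empty hQe]
    constructor <;> simp [cross]
  have hexP : ∃ f', toEnd K l f' = P := by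
    by_contra h
    rw [rep, dif_neg h] at hPne
    simp at hPne
  have hexQ : ∃ g', toEnd K l g' = Q := by
    by_contra h
    rw [rep, dif_neg h] at hQne
    simp at hQne
  set f := rep K l P with hf
  set g := rep K l Q with hg
  -- maxima of v on the supports
  obtain ⟨pmP, hpmP, hvdP⟩ := Finset.exists_mem_eq_sup f.support hPne
    (fun p => ((vp ρ σ (pt l p) : ℚ) : WithBot ℚ))
  obtain ⟨pmQ, hpmQ, hvdQ⟩ := Finset.exists_mem_eq_sup g.support hQne
    (fun p => ((vp ρ σ (pt l p) : ℚ) : WithBot ℚ))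
  have hvdP' : vdeg K ρ σ l P = ((vp ρ σ (pt l pmP) : ℚ) : WithBot ℚ) := hvdP
  have hvdQ' : vdeg K ρ σ l Q = ((vp ρ σ (pt l pmQ) : ℚ) : WithBot ℚ) := hvdQ
  have hbndP : ∀ p ∈ f.support, vp ρ σ (pt l p) ≤ vp ρ σ (pt l pmP) := by
    intro p hp
    have h1 : ((vp ρ σ (pt l p) : ℚ) : WithBot ℚ)
        ≤ ((vp ρ σ (pt l pmP) : ℚ) : WithBot ℚ) := by
      have h2 := Finset.le_sup (f := fun p => ((vp ρ σ (pt l p) : ℚ) : WithBot ℚ)) hp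
      rw [hvdP] at h2
      exact h2
    exact_mod_cast h1
  have hbndQ : ∀ q ∈ g.support, vp ρ σ (pt l q) ≤ vp ρ σ (pt l pmQ) := by
    intro q hq
    have h1 : ((vp ρ σ (pt l q) : ℚ) : WithBot ℚ)
        ≤ ((vp ρ σ (pt l pmQ) : ℚ) : WithBot ℚ) := by
      have h2 := Finset.le_sup (f := fun p => ((vp ρ σ (pt l p) : ℚ) : WithBot ℚ)) hq
      rw [hvdQ] at h2
      exact h2
    exact_mod_cast h1
  have hpmPlt : pmP ∈ (ltRep K ρ σ l P).support := ltRep_mem.mpr ⟨hpmP, hvdP'.symm⟩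
  have hpmQlt : pmQ ∈ (ltRep K ρ σ l Q).support := ltRep_mem.mpr ⟨hpmQ, hvdQ'.symm⟩
  -- Proportionality
  have hProp : Proportional K ρ σ l P Q := by
    by_contra hprop
    have hbr' : ell K ρ σ l (brk K P Q) = 0 := by rwa [rsBrk, if_neg hprop] at hbr
    have hlt0 : ltRep K ρ σ l (brk K P Q) = 0 := congrArg AddMonoidAlgebra.coeff hbr'
    rcases Finset.eq_empty_or_nonempty (rep K l (brk K P Q)).support with hBe | hBne
    · apply hprop
      rw [Proportional]
      have hv : vdeg K ρ σ l (brk K P Q) = ⊥ := by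
        show ((rep K l (brk K P Q)).support.sup _ : WithBot ℚ) = ⊥
        rw [hBe]
        rfl
      rw [hv, hvdP', hvdQ', WithBot.bot_add, ← WithBot.coe_add]
      exact WithBot.bot_lt_coe _
    · obtain ⟨pmB, hpmB, hvB⟩ := Finset.exists_mem_eq_sup _ hBne
        (fun p => ((vp ρ σ (pt l p) : ℚ) : WithBot ℚ))
      have hmemB : pmB ∈ (ltRep K ρ σ l (brk K P Q)).support := by
        refine ltRep_mem.mpr ⟨hpmB, ?_⟩
        exact hvB.symm
      rw [hlt0] at hmemB
      simp at hmemB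
  -- representative of the bracket
  have hrepbr : rep K l (brk K P Q) = mulRep K l f g - mulRep K l g f := by
    have hb : brk K P Q = toEnd K l (mulRep K l f g - mulRep K l g f) := by
      rw [map_sub, ← toEnd_mul l hl, ← toEnd_mul l hl, toEnd_rep hexP, toEnd_rep hexQ, brk]
    rw [hb, rep_toEnd l hl]
  -- the vanishing of the critical coefficient
  have hzero : ∀ z : ℤ × ℕ,
      vp ρ σ (pt l z) = vp ρ σ (pt l pmP) + vp ρ σ (pt l pmQ) - ((ρ:ℚ)+(σ:ℚ)) →
      (mulRep K l f g - mulRep K l g f) z = 0 := by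
    intro z hz
    by_contra hnz
    have hzs : z ∈ (rep K l (brk K P Q)).support := by
      rw [hrepbr]
      exact Finsupp.mem_support_iff.mpr hnz
    have hle : ((vp ρ σ (pt l z) : ℚ) : WithBot ℚ) ≤ vdeg K ρ σ l (brk K P Q) :=
      Finset.le_sup (f := fun p => ((vp ρ σ (pt l p) : ℚ) : WithBot ℚ)) hzs
    have hlt := hProp
    rw [Proportional, hvdP', hvdQ'] at hlt
    have h2 : ((vp ρ σ (pt l z) : ℚ) : WithBot ℚ) + (((ρ:ℚ)+(σ:ℚ) : ℚ) : WithBot ℚ)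
        < ((vp ρ σ (pt l pmP) : ℚ) : WithBot ℚ) + ((vp ρ σ (pt l pmQ) : ℚ) : WithBot ℚ) :=
      lt_of_le_of_lt (add_le_add_left hle _) hlt
    rw [← WithBot.coe_add, ← WithBot.coe_add, WithBot.coe_lt_coe] at h2
    rw [hz] at h2
    linarith
  constructor
  · -- st
    obtain ⟨pP, hPlt, hPmax⟩ := Finset.exists_max_image (ltRep K ρ σ l P).support
      (fun p => vp 1 (-1) (pt l p)) ⟨pmP, hpmPlt⟩
    obtain ⟨pQ, hQlt, hQmax⟩ := Finset.exists_max_image (ltRep K ρ σ l Q).support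
      (fun p => vp 1 (-1) (pt l p)) ⟨pmQ, hpmQlt⟩
    have hvPP : vp ρ σ (pt l pP) = vp ρ σ (pt l pmP) := vp_const_on_lt hPlt hpmPlt
    have hvQQ : vp ρ σ (pt l pQ) = vp ρ σ (pt l pmQ) := vp_const_on_lt hQlt hpmQlt
    rw [stP_eq hl hρσ P hPlt hPmax, stP_eq hl hρσ Q hQlt hQmax]
    have hdet : (ρ:ℚ) * (((-1:ℤ)):ℚ) - (σ:ℚ) * (((1:ℤ)):ℚ) ≠ 0 := by
      push_cast; intro h; linarith
    refine core hl hρσ f g hdet ((ltRep_mem.mp hPlt).1) ((ltRep_mem.mp hQlt).1)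
      (fun p hp => hvPP ▸ hbndP p hp) (fun q hq => hvQQ ▸ hbndQ q hq) ?_ ?_ ?_
    · intro p hp hv
      have hplt : p ∈ (ltRep K ρ σ l P).support := by
        refine ltRep_mem.mpr ⟨hp, ?_⟩
        rw [hvdP']
        exact_mod_cast hv.trans hvPP
      exact hPmax p hplt
    · intro q hq hv
      have hqlt : q ∈ (ltRep K ρ σ l Q).support := by
        refine ltRep_mem.mpr ⟨hq, ?_⟩
        rw [hvdQ']
        exact_mod_cast hv.trans hvQQ
      exact hQmax q hqlt
    · intro z hz
      refine hzero z ?_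
      rw [hz, hvPP, hvQQ]
  · -- en
    obtain ⟨pP, hPlt, hPmax⟩ := Finset.exists_max_image (ltRep K ρ σ l P).support
      (fun p => vp (-1) 1 (pt l p)) ⟨pmP, hpmPlt⟩
    obtain ⟨pQ, hQlt, hQmax⟩ := Finset.exists_max_image (ltRep K ρ σ l Q).support
      (fun p => vp (-1) 1 (pt l p)) ⟨pmQ, hpmQlt⟩
    have hvPP : vp ρ σ (pt l pP) = vp ρ σ (pt l pmP) := vp_const_on_lt hPlt hpmPlt
    have hvQQ : vp ρ σ (pt l pQ) = vp ρ σ (pt l pmQ) := vp_const_on_lt hQlt hpmQlt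
    rw [enP_eq hl hρσ P hPlt hPmax, enP_eq hl hρσ Q hQlt hQmax]
    have hdet : (ρ:ℚ) * (((1:ℤ)):ℚ) - (σ:ℚ) * (((-1:ℤ)):ℚ) ≠ 0 := by
      push_cast; intro h; linarith
    refine core hl hρσ f g hdet ((ltRep_mem.mp hPlt).1) ((ltRep_mem.mp hQlt).1)
      (fun p hp => hvPP ▸ hbndP p hp) (fun q hq => hvQQ ▸ hbndQ q hq) ?_ ?_ ?_
    · intro p hp hv
      have hplt : p ∈ (ltRep K ρ σ l P).support := by
        refine ltRep_mem.mpr ⟨hp, ?_⟩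
        rw [hvdP']
        exact_mod_cast hv.trans hvPP
      exact hPmax p hplt
    · intro q hq hv
      have hqlt : q ∈ (ltRep K ρ σ l Q).support := by
        refine ltRep_mem.mpr ⟨hq, ?_⟩
        rw [hvdQ']
        exact_mod_cast hv.trans hvQQ
      exact hQmax q hqlt
    · intro z hz
      refine hzero z ?_
      rw [hz, hvPP, hvQQ]

end Dixmier
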